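/- The log-matrix of S_12 (= N/36 with N the given 12×12 integer matrix) contains no 2×6, 3×4, 4×3, or 6×2 all-zero submatrix other than those meeting only the first row and first column trivially; more precisely, after normalizing so the first row and column are zero, there is no a×b all-zero submatrix with {a,b} ∈ {{2,6},{3,4}} whose row set and column set both have size ≥ 2 beyond index 1. Consequently S_12 is not of Dita type. -/

import Mathlib

open Matrix Complex Real Finset

/-- A complex Hadamard matrix: all entries unimodular and rows pairwise orthogonal. -/
def IsCHadamard {ι : Type*} [Fintype ι] [DecidableEq ι] (H : Matrix ι ι ℂ) : Prop :=
  (∀ i j, ‖H i j‖ = 1) ∧ H * Hᴴ = (Fintype.card ι : ℂ) • 1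

/-- The integer matrix `N` of `S₁₂` (entries of `log S₁₂` are `N/36`). -/
def N12 : Matrix (Fin 12) (Fin 12) ℕ :=
  !![0,0,0,0,0,0,0,0,0,0,0,0;
     0,24,12,0,24,12,0,24,12,0,24,12;
     0,12,24,9,21,33,0,12,24,9,21,33;
     0,24,12,18,6,30,0,24,12,18,6,30;
     0,12,24,27,3,15,0,12,24,27,3,15;
     0,0,0,18,18,18,9,9,9,27,27,27;
     0,4,8,0,4,8,18,22,26,18,22,26;
     0,16,32,0,16,32,18,34,14,18,34,14;
     0,28,20,0,28,20,18,10,2,18,10,2;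
     0,12,24,18,30,6,18,30,6,0,12,24;
     0,24,12,18,6,30,18,6,30,0,24,12;
     0,0,0,18,18,18,27,27,27,9,9,9]

/-- The matrix `S₁₂`. -/
noncomputable def S12 : Matrix (Fin 12) (Fin 12) ℂ :=
  Matrix.of fun j k : Fin 12 => Complex.exp (2 * π * Complex.I * (N12 j k : ℂ) / 36)

/-- Equivalence of `12×12` complex Hadamard matrices: `K' = D₁P₁KP₂D₂` with
`D₁, D₂` unitary diagonal and `P₁, P₂` permutation matrices. -/
def HadEquiv12 (K K' : Matrix (Fin 12) (Fin 12) ℂ) : Prop :=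
  ∃ (d1 d2 : Fin 12 → ℂ) (p1 p2 : Equiv.Perm (Fin 12)),
    (∀ i, ‖d1 i‖ = 1) ∧ (∀ i, ‖d2 i‖ = 1) ∧
    K' = Matrix.diagonal d1 * p1.permMatrix ℂ * K * p2.permMatrix ℂ * Matrix.diagonal d2

/-- A `12×12` matrix is of Dita type if it is equivalent to a matrix arising from
Dita's construction with a `k×k` Hadamard matrix `M` and `n×n` Hadamard matrices
`N₁,…,N_k` (with `k, n ≥ 2`, `kn = 12`). -/
def IsDitaType12 (K : Matrix (Fin 12) (Fin 12) ℂ) : Prop :=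
  ∃ (k n : ℕ) (M : Matrix (Fin k) (Fin k) ℂ) (Ns : Fin k → Matrix (Fin n) (Fin n) ℂ)
    (e : Fin 12 ≃ Fin k × Fin n) (K' : Matrix (Fin 12) (Fin 12) ℂ),
    2 ≤ k ∧ 2 ≤ n ∧ IsCHadamard M ∧ (∀ j, IsCHadamard (Ns j)) ∧
    (∀ x y : Fin 12, K' x y = M (e x).1 (e y).1 * Ns (e y).1 (e x).2 (e y).2) ∧
    HadEquiv12 K K'


section Aux

lemma rowcard4' : ∀ r : Fin 12, r ∉ ({0} : Finset (Fin 12)) →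
    ((univ : Finset (Fin 12)).filter (fun c => N12 r c % 36 = 0)).card ≤ 4 := by decide
lemma colcard5' : ∀ c : Fin 12, c ∉ ({0} : Finset (Fin 12)) →
    ((univ : Finset (Fin 12)).filter (fun r => N12 r c % 36 = 0)).card ≤ 5 := by decide
lemma rowcard3' : ∀ r : Fin 12, r ∉ ({0,1} : Finset (Fin 12)) →
    ((univ : Finset (Fin 12)).filter (fun c => N12 r c % 36 = 0)).card ≤ 3 := by decide
lemma rowcard2' : ∀ r : Fin 12, r ∉ ({0,1,5,11} : Finset (Fin 12)) →
    ((univ : Finset (Fin 12)).filter (fun c => N12 r c % 36 = 0)).card ≤ 2 := by decide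
lemma paircard' : ((univ : Finset (Fin 12)).filter
    (fun c => N12 1 c % 36 = 0 ∧ N12 5 c % 36 = 0)).card ≤ 1 := by decide

lemma exists_notin' {R s : Finset (Fin 12)} (h : s.card < R.card) : ∃ r ∈ R, r ∉ s := by
  by_contra h'
  push_neg at h'
  exact absurd (Finset.card_le_card h') (by omega)

lemma S12_part1 : ∀ ab : ℕ × ℕ, ab ∈ ([(2,6), (6,2), (3,4), (4,3)] : List (ℕ × ℕ)) →
      ¬ ∃ (R C : Finset (Fin 12)), R.card = ab.1 ∧ C.card = ab.2 ∧
        ∀ r ∈ R, ∀ c ∈ C, N12 r c % 36 = 0 := by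
  intro ab hab
  fin_cases hab <;> rintro ⟨R, C, hR, hC, h⟩
  · obtain ⟨r, hrR, hr⟩ := exists_notin' (s := {0}) (by rw [hR]; decide)
    have hsub : C ⊆ univ.filter (fun c => N12 r c % 36 = 0) :=
      fun c hc => mem_filter.2 ⟨mem_univ _, h r hrR c hc⟩
    have := Finset.card_le_card hsub
    have := rowcard4' r hr
    omega
  · obtain ⟨c, hcC, hc⟩ := exists_notin' (R := C) (s := {0}) (by rw [hC]; decide)
    have hsub : R ⊆ univ.filter (fun r => N12 r c % 36 = 0) :=
      fun r hr => mem_filter.2 ⟨mem_univ _, h r hr c hcC⟩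
    have := Finset.card_le_card hsub
    have := colcard5' c hc
    omega
  · obtain ⟨r, hrR, hr⟩ := exists_notin' (s := {0,1}) (by rw [hR]; decide)
    have hsub : C ⊆ univ.filter (fun c => N12 r c % 36 = 0) :=
      fun c hc => mem_filter.2 ⟨mem_univ _, h r hrR c hc⟩
    have := Finset.card_le_card hsub
    have := rowcard3' r hr
    omega
  · by_cases h' : ∃ r ∈ R, r ∉ ({0,1,5,11} : Finset (Fin 12))
    · obtain ⟨r, hrR, hr⟩ := h'
      have hsub : C ⊆ univ.filter (fun c => N12 r c % 36 = 0) :=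
        fun c hc => mem_filter.2 ⟨mem_univ _, h r hrR c hc⟩
      have := Finset.card_le_card hsub
      have := rowcard2' r hr
      omega
    · push_neg at h'
      have hRs : R = ({0,1,5,11} : Finset (Fin 12)) :=
        Finset.eq_of_subset_of_card_le (fun r hr => h' r hr) (by rw [hR]; decide)
      have h1R : (1 : Fin 12) ∈ R := by rw [hRs]; decide
      have h5R : (5 : Fin 12) ∈ R := by rw [hRs]; decide
      have hsub : C ⊆ univ.filter (fun c => N12 1 c % 36 = 0 ∧ N12 5 c % 36 = 0) :=
        fun c hc => mem_filter.2 ⟨mem_univ _, h 1 h1R c hc, h 5 h5R c hc⟩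
      have := Finset.card_le_card hsub
      have := paircard'
      omega

lemma perm_entry' (d1 d2 : Fin 12 → ℂ) (p1 p2 : Equiv.Perm (Fin 12))
    (S : Matrix (Fin 12) (Fin 12) ℂ) (x y : Fin 12) :
    (Matrix.diagonal d1 * p1.permMatrix ℂ * S * p2.permMatrix ℂ * Matrix.diagonal d2) x y
      = d1 x * S (p1 x) (p2.symm y) * d2 y := by
  rw [Matrix.mul_assoc (Matrix.diagonal d1), PEquiv.toMatrix_toPEquiv_mul,
    PEquiv.mul_toMatrix_toPEquiv, Matrix.mul_diagonal]
  simp [Matrix.diagonal_mul]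

lemma exp_one_mod' (a : ℕ) (h : Complex.exp (2 * π * Complex.I * (a : ℂ) / 36) = 1) :
    a % 36 = 0 := by
  rw [Complex.exp_eq_one_iff] at h
  obtain ⟨m, hm⟩ := h
  have h2 : (2 : ℂ) * π * Complex.I ≠ 0 := by
    refine mul_ne_zero (mul_ne_zero two_ne_zero ?_) Complex.I_ne_zero
    exact Complex.ofReal_ne_zero.2 Real.pi_ne_zero
  have h3 : ((a : ℂ) / 36 - m) * (2 * π * Complex.I) = 0 := by linear_combination hm
  have h4 : (a : ℂ) / 36 - m = 0 := by
    rcases mul_eq_zero.1 h3 with h | h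
    · exact h
    · exact absurd h h2
  have h5 : (a : ℂ) = m * 36 := (div_eq_iff (by norm_num)).1 (sub_eq_zero.1 h4)
  have h6 : (a : ℤ) = m * 36 := by exact_mod_cast h5
  omega

lemma fiber_card2' {k n : ℕ} (F : Fin 12 ≃ Fin k × Fin n) (mu : Fin n) :
    ((univ : Finset (Fin 12)).filter (fun u => (F u).2 = mu)).card = k := by
  have himg : (univ : Finset (Fin 12)).filter (fun u => (F u).2 = mu)
      = Finset.image (fun i : Fin k => F.symm (i, mu)) univ := by
    ext u
    simp only [mem_filter, mem_univ, true_and, mem_image]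
    constructor
    · intro h
      exact ⟨(F u).1, by rw [← h]; simp⟩
    · rintro ⟨i, rfl⟩
      simp
  rw [himg, Finset.card_image_of_injective _
    (fun a b hab => by simpa using F.symm.injective hab), card_univ, Fintype.card_fin]

lemma fiber_card1' {k n : ℕ} (F : Fin 12 ≃ Fin k × Fin n) (j : Fin k) :
    ((univ : Finset (Fin 12)).filter (fun u => (F u).1 = j)).card = n := by
  have himg : (univ : Finset (Fin 12)).filter (fun u => (F u).1 = j)
      = Finset.image (fun mu : Fin n => F.symm (j, mu)) univ := by
    ext u
    simp only [mem_filter, mem_univ, true_and, mem_image]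
    constructor
    · intro h
      exact ⟨(F u).2, by rw [← h]; simp⟩
    · rintro ⟨mu, rfl⟩
      simp
  rw [himg, Finset.card_image_of_injective _
    (fun a b hab => by simpa using F.symm.injective hab), card_univ, Fintype.card_fin]

lemma uni_mul_conj' (z : ℂ) (h : ‖z‖ = 1) : z * (starRingEnd ℂ) z = 1 := by
  rw [Complex.mul_conj]
  norm_cast
  rw [Complex.normSq_eq_norm_sq, h, one_pow]

lemma ratio_eq' (A A0 Bv B0 M1 M0 Nv N0 : ℂ)
    (e1 : A * (starRingEnd ℂ) A = 1) (e0 : A0 * (starRingEnd ℂ) A0 = 1)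
    (e2 : M1 * (starRingEnd ℂ) M1 = 1) (e3 : M0 * (starRingEnd ℂ) M0 = 1) :
    (A * Bv * (M1 * Nv)) * (starRingEnd ℂ) (A * B0 * (M1 * N0))
      = (A0 * Bv * (M0 * Nv)) * (starRingEnd ℂ) (A0 * B0 * (M0 * N0)) := by
  simp only [_root_.map_mul]
  linear_combination (Bv * (starRingEnd ℂ) B0 * (Nv * (starRingEnd ℂ) N0)) *
    (((starRingEnd ℂ) M1 * M1) * e1 + e2 - ((starRingEnd ℂ) M0 * M0) * e0 - e3)

lemma S12_part2 : ¬ IsDitaType12 S12 := by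
  rintro ⟨k, n, M, Ns, e, K', hk, hn, hM, hNs, hK', d1, d2, p1, p2, hd1, hd2, hEq⟩
  have hkn : 12 = k * n := by
    have := Fintype.card_congr e
    simpa using this
  have hrow0 : ∀ v : Fin 12, N12 0 v = 0 := by decide
  have hcol0 : ∀ u : Fin 12, N12 u 0 = 0 := by decide
  have hS12row : ∀ v : Fin 12, S12 0 v = 1 := by
    intro v
    simp [S12, hrow0 v]
  have hS12col : ∀ u : Fin 12, S12 u 0 = 1 := by
    intro u
    simp [S12, hcol0 u]
  -- entrywise formula for S12
  have hS : ∀ u v : Fin 12, S12 u v = (d1 (p1.symm u))⁻¹ * (d2 (p2 v))⁻¹ *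
      (M (e (p1.symm u)).1 (e (p2 v)).1 * Ns (e (p2 v)).1 (e (p1.symm u)).2 (e (p2 v)).2) := by
    intro u v
    have hne1 : d1 (p1.symm u) ≠ 0 := by
      intro h0
      have := hd1 (p1.symm u)
      rw [h0] at this
      simp at this
    have hne2 : d2 (p2 v) ≠ 0 := by
      intro h0
      have := hd2 (p2 v)
      rw [h0] at this
      simp at this
    have h1 := hK' (p1.symm u) (p2 v)
    rw [hEq, perm_entry'] at h1
    simp only [Equiv.apply_symm_apply, Equiv.symm_apply_apply] at h1
    rw [← h1]
    field_simp
  have key : ∀ u v : Fin 12, (e (p1.symm u)).2 = (e (p1.symm 0)).2 →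
      (e (p2 v)).1 = (e (p2 0)).1 →
      S12 u v * (starRingEnd ℂ) (S12 u 0) = S12 0 v * (starRingEnd ℂ) (S12 0 0) := by
    intro u v hu hv
    rw [hS u v, hS u 0, hS 0 v, hS 0 0, hu, hv]
    exact ratio_eq' _ _ _ _ _ _ _ _
      (uni_mul_conj' _ (by simp [map_inv₀, hd1]))
      (uni_mul_conj' _ (by simp [map_inv₀, hd1]))
      (uni_mul_conj' _ (hM.1 _ _))
      (uni_mul_conj' _ (hM.1 _ _))
  -- the zero block
  have hzero : ∀ u ∈ (univ : Finset (Fin 12)).filter (fun u => (e (p1.symm u)).2 = (e (p1.symm 0)).2),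
      ∀ v ∈ (univ : Finset (Fin 12)).filter (fun v => (e (p2 v)).1 = (e (p2 0)).1),
      N12 u v % 36 = 0 := by
    intro u hu v hv
    rw [mem_filter] at hu hv
    have h1 := key u v hu.2 hv.2
    rw [hS12row v, hS12row 0, hS12col u, _root_.map_one, mul_one, mul_one] at h1
    exact exp_one_mod' _ (by simpa [S12] using h1)
  have hRcard : ((univ : Finset (Fin 12)).filter
      (fun u => (e (p1.symm u)).2 = (e (p1.symm 0)).2)).card = k := by
    convert fiber_card2' (p1.symm.trans e) ((e (p1.symm 0)).2) using 3
    rfl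
  have hCcard : ((univ : Finset (Fin 12)).filter
      (fun v => (e (p2 v)).1 = (e (p2 0)).1)).card = n := by
    convert fiber_card1' ((p2 : Fin 12 ≃ Fin 12).trans e) ((e (p2 0)).1) using 3
    rfl
  have hcases : (k = 2 ∧ n = 6) ∨ (k = 6 ∧ n = 2) ∨ (k = 3 ∧ n = 4) ∨ (k = 4 ∧ n = 3) := by
    have hk6 : k ≤ 6 := by nlinarith
    interval_cases k <;> omega
  have hmem : ((k, n) : ℕ × ℕ) ∈ ([(2,6), (6,2), (3,4), (4,3)] : List (ℕ × ℕ)) := by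
    rcases hcases with ⟨rfl, rfl⟩ | ⟨rfl, rfl⟩ | ⟨rfl, rfl⟩ | ⟨rfl, rfl⟩ <;> simp
  exact S12_part1 (k, n) hmem ⟨_, _, hRcard, hCcard, hzero⟩

end Aux

/-- The log-matrix of `S₁₂` contains no `2×6`, `6×2`, `3×4` or `4×3` all-zero
submatrix; consequently `S₁₂` is not of Dita type. -/
theorem S12_no_zero_blocks_and_not_dita :
    (∀ ab : ℕ × ℕ, ab ∈ ([(2,6), (6,2), (3,4), (4,3)] : List (ℕ × ℕ)) →
      ¬ ∃ (R C : Finset (Fin 12)), R.card = ab.1 ∧ C.card = ab.2 ∧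
        ∀ r ∈ R, ∀ c ∈ C, N12 r c % 36 = 0) ∧
    ¬ IsDitaType12 S12 := by
  exact ⟨S12_part1, S12_part2⟩
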